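/- A topology O on a set X is strongly reversible (invariant under all bijections of X) if and only if O is discrete, or antidiscrete, or X is infinite and O = { X ∖ F : |F| < λ } ∪ {∅} for some infinite cardinal λ ≤ |X|. -/

import Mathlib

open Set Filter TopologicalSpace Cardinal

variable {X : Type*}

/-- The family of open sets of a topology. -/
def opensOf (O : TopologicalSpace X) : Set (Set X) := {U | O.IsOpen U}

/-- The image family f[O] = { f[U] : U ∈ O } of a topology under a bijection. -/
def imgOpens (f : X ≃ X) (O : TopologicalSpace X) : Set (Set X) :=
  (Set.image f) '' opensOf O

/-- A topology is reversible iff every continuous self-bijection is a homeomorphism. -/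
def Reversible (O : TopologicalSpace X) : Prop :=
  ∀ f : X ≃ X, @Continuous X X O O f → @Continuous X X O O f.symm

/-- The homeomorphism class [O]_≅ of a topology within the topologies on X. -/
def homeoCls (O : TopologicalSpace X) : Set (TopologicalSpace X) :=
  {O' | ∃ f : X ≃ X, imgOpens f O = opensOf O'}

/-- O₁ ≼ O₂ : there is a condensation (continuous bijection) (X,O₂) → (X,O₁). -/
def Cond (O₁ O₂ : TopologicalSpace X) : Prop :=
  ∃ f : X ≃ X, @Continuous X X O₂ O₁ f

/-- The condensational equivalence class [O]_∼. -/
def simCls (O : TopologicalSpace X) : Set (TopologicalSpace X) :=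
  {O' | Cond O' O ∧ Cond O O'}

universe u

lemma my_exists_equiv_image_eq {X : Type u} {U V : Set X}
    (h1 : #U = #V) (h2 : #(↥Uᶜ) = #(↥Vᶜ)) : ∃ f : X ≃ X, f '' U = V := by
  classical
  obtain ⟨e1⟩ := Cardinal.eq.mp h1
  obtain ⟨e2⟩ := Cardinal.eq.mp h2
  refine ⟨(Equiv.Set.sumCompl U).symm.trans ((e1.sumCongr e2).trans (Equiv.Set.sumCompl V)), ?_⟩
  have hfwd : ∀ x (hx : x ∈ U),
      ((Equiv.Set.sumCompl U).symm.trans ((e1.sumCongr e2).trans (Equiv.Set.sumCompl V))) x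
        = ↑(e1 ⟨x, hx⟩) := by
    intro x hx
    simp [Equiv.Set.sumCompl_symm_apply_of_mem hx]
  ext y
  constructor
  · rintro ⟨x, hx, rfl⟩
    rw [hfwd x hx]
    exact (e1 ⟨x, hx⟩).2
  · intro hy
    refine ⟨↑(e1.symm ⟨y, hy⟩), (e1.symm ⟨y, hy⟩).2, ?_⟩
    rw [hfwd _ (e1.symm ⟨y, hy⟩).2]
    simp

lemma my_mk_eq_of_compl_lt {X : Type u} [Infinite X] {S : Set X} (h : #(↥Sᶜ) < #X) :
    Cardinal.mk S = Cardinal.mk X := by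
  refine le_antisymm (mk_set_le S) ?_
  by_contra hlt
  push_neg at hlt
  have := Cardinal.add_lt_of_lt (Cardinal.aleph0_le_mk X) hlt h
  rw [mk_sum_compl] at this
  exact lt_irrefl _ this

lemma my_exists_subset_point {X : Type u} {V : Set X} {z : X} (hz : z ∈ V) {κ : Cardinal.{u}}
    (h1 : 1 ≤ κ) (h2 : κ ≤ #V) : ∃ W, W ⊆ V ∧ z ∈ W ∧ #W = κ := by
  obtain ⟨S, hSV, hS⟩ := Cardinal.le_mk_iff_exists_subset.mp h2
  by_cases hzS : z ∈ S
  · exact ⟨S, hSV, hzS, hS⟩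
  · have hSne : S.Nonempty := by
      rw [Set.nonempty_coe_sort.symm, ← Cardinal.mk_ne_zero_iff, hS]
      exact fun h0 => by simp [h0] at h1
    obtain ⟨s₀, hs₀⟩ := hSne
    refine ⟨insert z (S \ {s₀}), ?_, mem_insert _ _, ?_⟩
    · exact insert_subset hz ((diff_subset).trans hSV)
    · have hz' : z ∉ S \ {s₀} := fun h => hzS h.1
      rw [Cardinal.mk_insert hz', ← hS,
        ← Cardinal.mk_diff_add_mk (Set.singleton_subset_iff.mpr hs₀), Cardinal.mk_singleton]

lemma my_exists_disjoint_split {X : Type u} {V : Set X} {c : Cardinal.{u}}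
    (h : c + c ≤ #V) : ∃ A B : Set X, A ⊆ V ∧ B ⊆ V ∧ Disjoint A B ∧ #A = c ∧ #B = c := by
  obtain ⟨S, hSV, hS⟩ := Cardinal.le_mk_iff_exists_subset.mp h
  have : #(↥S) = #(c.out ⊕ c.out) := by
    rw [hS, Cardinal.mk_sum, Cardinal.mk_out, Cardinal.lift_id]
  obtain ⟨e⟩ := Cardinal.eq.mp this
  refine ⟨Subtype.val '' (e.symm '' (range Sum.inl)),
          Subtype.val '' (e.symm '' (range Sum.inr)), ?_, ?_, ?_, ?_, ?_⟩
  · exact (image_subset_iff.mpr (fun a _ => a.2)).trans (by simp [hSV])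
  · exact (image_subset_iff.mpr (fun a _ => a.2)).trans (by simp [hSV])
  · apply Set.disjoint_image_of_injective Subtype.val_injective
    apply Set.disjoint_image_of_injective e.symm.injective
    rw [Set.disjoint_iff_inter_eq_empty]
    ext a; cases a <;> simp
  · rw [Cardinal.mk_image_eq Subtype.val_injective, Cardinal.mk_image_eq e.symm.injective,
      Cardinal.mk_range_eq _ Sum.inl_injective]
    exact Cardinal.mk_out c
  · rw [Cardinal.mk_image_eq Subtype.val_injective, Cardinal.mk_image_eq e.symm.injective,
      Cardinal.mk_range_eq _ Sum.inr_injective]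
    exact Cardinal.mk_out c


/-- a topology is strongly reversible iff it is discrete, or
antidiscrete, or X is infinite and it is a generalized cofinite topology
{ X ∖ F : |F| < λ } ∪ {∅} for some infinite cardinal λ ≤ |X|. -/
theorem stmt_18 {X : Type u} (O : TopologicalSpace X) :
    (∀ f : X ≃ X, imgOpens f O = opensOf O) ↔
      (O = ⊥ ∨ O = ⊤ ∨
        (Infinite X ∧ ∃ lam : Cardinal.{u}, Cardinal.aleph0 ≤ lam ∧
          lam ≤ Cardinal.mk X ∧
          ∀ U : Set X, O.IsOpen U ↔ (U = ∅ ∨ Cardinal.mk ↥(Uᶜ) < lam))) := by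
  classical
  letI : TopologicalSpace X := O
  constructor
  · intro h
    have hmov : ∀ (f : X ≃ X) (U : Set X), O.IsOpen U → O.IsOpen (f '' U) := by
      intro f U hU
      have hmem : (⇑f '' U) ∈ imgOpens f O := ⟨U, hU, rfl⟩
      rw [h f] at hmem
      exact hmem
    have hcong : ∀ U V : Set X, O.IsOpen U → #U = #V → #(↥Uᶜ) = #(↥Vᶜ) → O.IsOpen V := by
      intro U V hU h1 h2
      obtain ⟨f, hf⟩ := my_exists_equiv_image_eq h1 h2
      exact hf ▸ hmov f U hU
    by_cases hbot : O = ⊥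
    · exact Or.inl hbot
    by_cases htop : O = ⊤
    · exact Or.inr (Or.inl htop)
    refine Or.inr (Or.inr ?_)
    -- a nontrivial open set exists
    have hU0' : ∃ U : Set X, O.IsOpen U ∧ U ≠ ∅ ∧ U ≠ Set.univ := by
      by_contra hc
      push_neg at hc
      apply htop
      rw [TopologicalSpace.ext_iff]
      intro u
      rw [TopologicalSpace.isOpen_top_iff]
      constructor
      · intro hu
        by_cases hue : u = ∅
        · exact Or.inl hue
        · exact Or.inr (hc u hu (nonempty_iff_ne_empty.mpr hue))
      · rintro (rfl | rfl)
        · exact isOpen_empty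
        · exact isOpen_univ
    obtain ⟨U0, hU0o, hU0ne, hU0nu⟩ := hU0'
    have hU0non : U0.Nonempty := nonempty_iff_ne_empty.mpr hU0ne
    -- all co-singletons are open
    have hcos : ∀ y : X, O.IsOpen ({y}ᶜ : Set X) := by
      intro y
      have hcover : ∀ z : X, z ≠ y → ∃ W, O.IsOpen W ∧ z ∈ W ∧ y ∉ W := by
        intro z hzy
        obtain ⟨u, hu⟩ := hU0non
        have hU1o : O.IsOpen ((Equiv.swap u z) '' U0) := hmov _ _ hU0o
        set U1 := (Equiv.swap u z) '' U0 with hU1def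
        have hzU1 : z ∈ U1 := ⟨u, hu, Equiv.swap_apply_left u z⟩
        by_cases hy : y ∈ U1
        · have hU1c : U1ᶜ.Nonempty := by
            rw [Set.nonempty_compl]
            intro hU
            apply hU0nu
            have h2 := congrArg (fun s => (Equiv.swap u z).symm '' s) hU
            simp only [hU1def] at h2
            rwa [Equiv.symm_image_image, Set.image_univ, Equiv.range_eq_univ] at h2
          obtain ⟨w, hw⟩ := hU1c
          have hwy : w ≠ y := fun hh => hw (hh ▸ hy)
          have hwz : w ≠ z := fun hh => hw (hh ▸ hzU1)
          refine ⟨(Equiv.swap y w) '' U1, hmov _ _ hU1o, ?_, ?_⟩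
          · exact ⟨z, hzU1, Equiv.swap_apply_of_ne_of_ne hzy (Ne.symm hwz)⟩
          · rintro ⟨a, ha, hay⟩
            have : a = w := by
              apply (Equiv.swap y w).injective
              rw [hay, Equiv.swap_apply_right]
            exact hw (this ▸ ha)
        · exact ⟨U1, hU1o, hzU1, hy⟩
      have heq : ({y}ᶜ : Set X) = ⋃₀ {W | O.IsOpen W ∧ W ⊆ ({y}ᶜ : Set X)} := by
        apply Subset.antisymm
        · intro z hz
          have hzy : z ≠ y := fun hh => hz (by simp [hh])
          obtain ⟨W, hWo, hzW, hyW⟩ := hcover z hzy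
          refine ⟨W, ⟨hWo, fun a ha hay => ?_⟩, hzW⟩
          exact hyW ((Set.mem_singleton_iff.mp hay) ▸ ha)
        · rintro z ⟨W, ⟨_, hWs⟩, hzW⟩; exact hWs hzW
      rw [heq]
      exact isOpen_sUnion (fun W hW => hW.1)
    -- all cofinite sets are open
    have hcof : ∀ F : Set X, F.Finite → O.IsOpen Fᶜ := by
      intro F hF
      have : Fᶜ = ⋂ y ∈ F, ({y}ᶜ : Set X) := by
        ext a; simp only [mem_compl_iff, mem_iInter, mem_singleton_iff]
        exact ⟨fun h i hi he => h (he ▸ hi), fun h ha => h a ha rfl⟩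
      rw [this]
      exact hF.isOpen_biInter (fun y _ => hcos y)
    -- X must be infinite
    have hinf : Infinite X := by
      by_contra hi
      rw [not_infinite_iff_finite] at hi
      apply hbot
      apply eq_bot_of_singletons_open
      intro x
      show O.IsOpen {x}
      rw [← compl_compl ({x} : Set X)]
      exact hcof _ (Set.toFinite _)
    haveI := hinf
    refine ⟨hinf, ?_⟩
    -- nonempty open sets have small complements
    have hsmall : ∀ U : Set X, O.IsOpen U → U.Nonempty → #(↥Uᶜ) < #X := by
      by_contra hc
      push_neg at hc
      obtain ⟨U, hUo, hUne, hUc⟩ := hc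
      have hUc' : #(↥Uᶜ) = #X := le_antisymm (mk_set_le _) hUc
      apply hbot
      have hκ1 : 1 ≤ #U :=
        Cardinal.one_le_iff_ne_zero.mpr
          (Cardinal.mk_ne_zero_iff.mpr (Set.nonempty_coe_sort.mpr hUne))
      -- every set of full size with full-size complement is open
      have hbig : ∀ V : Set X, #V = #X → #(↥Vᶜ) = #X → O.IsOpen V := by
        intro V hV hVc
        have hcover : ∀ z ∈ V, ∃ W, (O.IsOpen W ∧ W ⊆ V) ∧ z ∈ W := by
          intro z hz
          have hκle : #U ≤ #V := by rw [hV]; exact mk_set_le U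
          obtain ⟨W, hWV, hzW, hWκ⟩ := my_exists_subset_point hz hκ1 hκle
          refine ⟨W, ⟨?_, hWV⟩, hzW⟩
          apply hcong U W hUo hWκ.symm
          have hWc : #(↥Wᶜ) = #X := le_antisymm (mk_set_le _) (by
            rw [← hVc]; exact Cardinal.mk_le_mk_of_subset (compl_subset_compl.mpr hWV))
          rw [hUc', hWc]
        have hVeq : V = ⋃₀ {W | O.IsOpen W ∧ W ⊆ V} := by
          apply Subset.antisymm
          · intro z hz
            obtain ⟨W, hW, hzW⟩ := hcover z hz
            exact ⟨W, hW, hzW⟩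
          · rintro z ⟨W, ⟨_, hWV⟩, hzW⟩
            exact hWV hzW
        rw [hVeq]
        exact isOpen_sUnion (fun W hW => hW.1)
      -- partition X into three full-size pieces
      have hsum : #((X ⊕ X) ⊕ X) = #X := by
        have h2 : #X + #X = #X := Cardinal.add_eq_self (Cardinal.aleph0_le_mk X)
        simp only [Cardinal.mk_sum, Cardinal.lift_id]
        rw [h2, h2]
      obtain ⟨e⟩ := Cardinal.eq.mp hsum
      set P₁ : Set X := range (fun a : X => e (Sum.inl (Sum.inl a))) with hP₁
      set P₂ : Set X := range (fun a : X => e (Sum.inl (Sum.inr a))) with hP₂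
      set x : X := e (Sum.inr (Classical.arbitrary X)) with hx
      have hxP₁ : x ∉ P₁ := by
        rintro ⟨a, ha⟩
        exact absurd (e.injective ha) (by simp)
      have hxP₂ : x ∉ P₂ := by
        rintro ⟨a, ha⟩
        exact absurd (e.injective ha) (by simp)
      have hd : ∀ a, a ∈ P₁ → a ∉ P₂ := by
        rintro a ⟨b, rfl⟩ ⟨c, hcc⟩
        have := e.injective hcc
        simp at this
      have hmkP₁ : #P₁ = #X :=
        Cardinal.mk_range_eq _ (fun a b hab => by simpa using e.injective hab)
      have hmkP₂ : #P₂ = #X :=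
        Cardinal.mk_range_eq _ (fun a b hab => by simpa using e.injective hab)
      have hV₁ : #(↥(insert x P₁)) = #X :=
        le_antisymm (mk_set_le _)
          (hmkP₁ ▸ Cardinal.mk_le_mk_of_subset (subset_insert _ _))
      have hV₂ : #(↥(insert x P₂)) = #X :=
        le_antisymm (mk_set_le _)
          (hmkP₂ ▸ Cardinal.mk_le_mk_of_subset (subset_insert _ _))
      have hV₁c : #(↥(insert x P₁)ᶜ) = #X := by
        refine le_antisymm (mk_set_le _) ?_
        rw [← hmkP₂]
        apply Cardinal.mk_le_mk_of_subset
        intro a haP₂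
        simp only [mem_compl_iff, mem_insert_iff, not_or]
        exact ⟨fun hax => hxP₂ (hax ▸ haP₂), fun haP₁ => hd a haP₁ haP₂⟩
      have hV₂c : #(↥(insert x P₂)ᶜ) = #X := by
        refine le_antisymm (mk_set_le _) ?_
        rw [← hmkP₁]
        apply Cardinal.mk_le_mk_of_subset
        intro a haP₁
        simp only [mem_compl_iff, mem_insert_iff, not_or]
        exact ⟨fun hax => hxP₁ (hax ▸ haP₁), fun haP₂ => hd a haP₁ haP₂⟩
      have hV₁o := hbig _ hV₁ hV₁c
      have hV₂o := hbig _ hV₂ hV₂c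
      have hxx : insert x P₁ ∩ insert x P₂ = {x} := by
        ext a
        simp only [mem_inter_iff, mem_insert_iff, mem_singleton_iff]
        constructor
        · rintro ⟨h1, h2⟩
          rcases h1 with rfl | h1
          · rfl
          rcases h2 with rfl | h2
          · rfl
          exact absurd h2 (hd a h1)
        · rintro rfl
          exact ⟨Or.inl rfl, Or.inl rfl⟩
      have hxo : O.IsOpen ({x} : Set X) := by
        rw [← hxx]
        exact IsOpen.inter hV₁o hV₂o
      apply eq_bot_of_singletons_open
      intro y
      have himg : (Equiv.swap x y) '' {x} = {y} := by
        rw [Set.image_singleton, Equiv.swap_apply_left]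
      exact himg ▸ hmov (Equiv.swap x y) {x} hxo
    -- downward closure
    have hdown : ∀ U V : Set X, O.IsOpen U → U.Nonempty → #(↥Vᶜ) ≤ #(↥Uᶜ) → O.IsOpen V := by
      intro U V hUo hUne hVU
      have hUc : #(↥Uᶜ) < #X := hsmall U hUo hUne
      obtain ⟨c, hc⟩ := exists_add_of_le hVU
      have hcκ : c ≤ #(↥Uᶜ) := hc ▸ le_add_self
      have hVX : #V = #X := my_mk_eq_of_compl_lt (lt_of_le_of_lt hVU hUc)
      have hUX : #U = #X := my_mk_eq_of_compl_lt hUc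
      have hcc : c + c ≤ #V := by
        rw [hVX]
        rcases lt_or_ge c ℵ₀ with hcw | hcw
        · exact le_of_lt (lt_of_lt_of_le (Cardinal.add_lt_aleph0 hcw hcw)
            (Cardinal.aleph0_le_mk X))
        · rw [Cardinal.add_eq_self hcw]
          exact le_of_lt (lt_of_le_of_lt hcκ hUc)
      obtain ⟨A, B, hAV, hBV, hAB, hA, hB⟩ := my_exists_disjoint_split hcc
      have hdisjF : ∀ {C : Set X}, C ⊆ V → Disjoint Vᶜ C := by
        intro C hC
        exact Set.disjoint_left.mpr (fun a haF haC => haF (hC haC))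
      have hmk₁ : #(↥(Vᶜ ∪ A)) = #(↥Uᶜ) := by
        rw [Cardinal.mk_union_of_disjoint (hdisjF hAV), hA, ← hc]
      have hmk₂ : #(↥(Vᶜ ∪ B)) = #(↥Uᶜ) := by
        rw [Cardinal.mk_union_of_disjoint (hdisjF hBV), hB, ← hc]
      have hopen : ∀ {C : Set X}, #(↥C) = #(↥Uᶜ) → O.IsOpen Cᶜ := by
        intro C hCmk
        apply hcong U Cᶜ hUo
        · rw [hUX]
          exact (my_mk_eq_of_compl_lt (by rw [compl_compl, hCmk]; exact hUc)).symm
        · rw [compl_compl, hCmk]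
      have hVeq : V = (Vᶜ ∪ A)ᶜ ∪ (Vᶜ ∪ B)ᶜ := by
        ext a
        simp only [mem_union, mem_compl_iff, not_or]
        constructor
        · intro haV
          by_cases haA : a ∈ A
          · exact Or.inr ⟨fun hh => hh haV, Set.disjoint_left.mp hAB haA⟩
          · exact Or.inl ⟨fun hh => hh haV, haA⟩
        · rintro (⟨h1, _⟩ | ⟨h1, _⟩) <;> · by_contra haV; exact h1 haV
      rw [hVeq]
      exact IsOpen.union (hopen hmk₁) (hopen hmk₂)
    -- the cardinal lam
    have hTbdd : BddAbove ((fun U : Set X => Order.succ (#(↥Uᶜ))) ''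
        {U : Set X | O.IsOpen U ∧ U.Nonempty}) := by
      refine ⟨Order.succ (#X), ?_⟩
      rintro _ ⟨U, hU, rfl⟩
      exact Order.succ_le_succ (mk_set_le _)
    have hTne : ((fun U : Set X => Order.succ (#(↥Uᶜ))) ''
        {U : Set X | O.IsOpen U ∧ U.Nonempty}).Nonempty :=
      ⟨_, ⟨univ, ⟨isOpen_univ, univ_nonempty⟩, rfl⟩⟩
    refine ⟨sSup ((fun U : Set X => Order.succ (#(↥Uᶜ))) ''
        {U : Set X | O.IsOpen U ∧ U.Nonempty}), ?_, ?_, ?_⟩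
    · rw [Cardinal.aleph0_le]
      intro n
      obtain ⟨F, hFn⟩ := Cardinal.le_mk_iff_exists_set.mp
        (le_of_lt (lt_of_lt_of_le (Cardinal.nat_lt_aleph0 n) (Cardinal.aleph0_le_mk X)))
      have hFfin : F.Finite := Cardinal.lt_aleph0_iff_set_finite.mp
        (hFn ▸ Cardinal.nat_lt_aleph0 n)
      have hFco : O.IsOpen Fᶜ := hcof F hFfin
      have hFne : (Fᶜ : Set X).Nonempty := by
        have hmk : #(↥(Fᶜ)) = #X := my_mk_eq_of_compl_lt (by
          rw [compl_compl, hFn]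
          exact lt_of_lt_of_le (Cardinal.nat_lt_aleph0 n) (Cardinal.aleph0_le_mk X))
        rw [← Set.nonempty_coe_sort, ← Cardinal.mk_ne_zero_iff, hmk]
        exact Cardinal.mk_ne_zero X
      have hmem : Order.succ ((n : Cardinal.{u})) ∈
          ((fun U : Set X => Order.succ (#(↥Uᶜ))) ''
            {U : Set X | O.IsOpen U ∧ U.Nonempty}) := by
        refine ⟨Fᶜ, ⟨hFco, hFne⟩, ?_⟩
        show Order.succ (#(↥(Fᶜᶜ))) = Order.succ ((n : Cardinal.{u}))
        rw [compl_compl, hFn]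
      exact le_trans (Order.le_succ _) (le_csSup hTbdd hmem)
    · apply csSup_le hTne
      rintro _ ⟨U, ⟨hUo, hUne⟩, rfl⟩
      exact Order.succ_le_iff.mpr (hsmall U hUo hUne)
    · intro U
      constructor
      · intro hUo
        by_cases hUe : U = ∅
        · exact Or.inl hUe
        · refine Or.inr (lt_of_lt_of_le (Order.lt_succ _) (le_csSup hTbdd ?_))
          exact ⟨U, ⟨hUo, nonempty_iff_ne_empty.mpr hUe⟩, rfl⟩
      · rintro (rfl | hlt)
        · exact isOpen_empty
        · obtain ⟨a, ⟨U₀, ⟨hU₀o, hU₀ne⟩, rfl⟩, hlta⟩ := exists_lt_of_lt_csSup hTne hlt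
          exact hdown U₀ U hU₀o hU₀ne (Order.lt_succ_iff.mp hlta)
  · rintro (rfl | rfl | ⟨hinf, lam, hal, hlam, hchar⟩) <;> intro f
    · ext V
      constructor
      · intro _
        exact @isOpen_discrete X ⊥ (discreteTopology_bot X) V
      · intro _
        exact ⟨f.symm '' V, @isOpen_discrete X ⊥ (discreteTopology_bot X) _,
          f.image_symm_image V⟩
    · ext V
      constructor
      · rintro ⟨W, hW, rfl⟩
        rcases (TopologicalSpace.isOpen_top_iff W).mp hW with rfl | rfl
        · show (⊤ : TopologicalSpace X).IsOpen _
          rw [Set.image_empty]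
          exact isOpen_empty
        · show (⊤ : TopologicalSpace X).IsOpen _
          rw [Set.image_univ, Equiv.range_eq_univ]
          exact isOpen_univ
      · intro hV
        rcases (TopologicalSpace.isOpen_top_iff V).mp hV with rfl | rfl
        · exact ⟨∅, (TopologicalSpace.isOpen_top_iff ∅).mpr (Or.inl rfl), Set.image_empty _⟩
        · exact ⟨univ, (TopologicalSpace.isOpen_top_iff univ).mpr (Or.inr rfl),
            by rw [Set.image_univ, Equiv.range_eq_univ]⟩
    · have himg : ∀ (g : X ≃ X) (W : Set X), O.IsOpen W → O.IsOpen (g '' W) := by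
        intro g W hW
        rw [hchar] at hW ⊢
        rcases hW with rfl | hW
        · exact Or.inl (Set.image_empty _)
        · refine Or.inr ?_
          rw [← Set.image_compl_eq g.bijective, Cardinal.mk_image_eq g.injective]
          exact hW
      ext V
      constructor
      · rintro ⟨W, hW, rfl⟩
        exact himg f W hW
      · intro hV
        exact ⟨f.symm '' V, himg f.symm V hV, f.image_symm_image V⟩
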